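/- Let X_1, ..., X_n, X_{n+1} be exchangeable real-valued random variables, almost surely distinct, α ∈ (0,1) with n ≥ ⌈(n+1)(1-α)⌉, and q̂ the ⌈(n+1)(1-α)⌉-th order statistic of X_1, ..., X_n. Then P(X_{n+1} ≤ q̂) ≤ 1 - α + 1/(n+1); i.e., the conformal coverage also has the matching upper bound. -/

import Mathlib

open MeasureTheory
open scoped ENNReal

/-- The `j`-th smallest value (1-indexed) among `f 0, ..., f (n-1)`. -/
noncomputable def orderStat {n : ℕ} (f : Fin n → ℝ) (j : ℕ) : ℝ :=
  ((Multiset.map f Finset.univ.val).sort (· ≤ ·)).getD (j - 1) 0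

/-- Exchangeability: the joint law is invariant under permutation of the indices. -/
def Exchangeable {Ω : Type*} [MeasurableSpace Ω] (μ : Measure Ω) {n : ℕ}
    (X : Fin n → Ω → ℝ) : Prop :=
  ∀ σ : Equiv.Perm (Fin n),
    Measure.map (fun ω i => X (σ i) ω) μ = Measure.map (fun ω i => X i ω) μ

-- perm reindex for filter card
lemma card_filter_perm {ι : Type*} [Fintype ι] [DecidableEq ι] (σ : Equiv.Perm ι)
    (p : ι → Prop) [DecidablePred p] :
    (Finset.univ.filter fun j => p (σ j)).card = (Finset.univ.filter p).card := by
  refine Finset.card_nbij (fun j => σ j) ?_ ?_ ?_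
  · intro a ha
    simp only [Finset.mem_filter, Finset.mem_univ, true_and] at ha ⊢
    simpa using ha
  · intro a _ b _ hab
    exact σ.injective hab
  · intro a ha
    simp only [Finset.coe_filter, Set.mem_setOf_eq, Finset.mem_univ, true_and] at ha
    exact ⟨σ.symm a, by simp [ha], by simp⟩

-- rank injectivity (deterministic)
lemma rank_lt_rank {ι : Type*} [Fintype ι] [DecidableEq ι] {g : ι → ℝ} {i i' : ι}
    (h : g i < g i') :
    (Finset.univ.filter fun j => g j ≤ g i).card < (Finset.univ.filter fun j => g j ≤ g i').card := by
  apply Finset.card_lt_card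
  constructor
  · intro j hj
    simp only [Finset.mem_filter, Finset.mem_univ, true_and] at hj ⊢
    exact hj.trans h.le
  · intro hsub
    have : g i' ≤ g i := by
      have := hsub (Finset.mem_filter.2 ⟨Finset.mem_univ i', le_refl _⟩)
      exact (Finset.mem_filter.1 this).2
    exact absurd this (not_le.2 h)

lemma sorted_le_get_iff {l : List ℝ} (hl : l.Pairwise (· ≤ ·)) {j : ℕ} (hj : j < l.length) (x : ℝ) :
    x ≤ l.get ⟨j, hj⟩ ↔ l.countP (fun y => decide (y < x)) ≤ j := by
  constructor
  · intro h
    have hsplit : l.countP (fun y => decide (y < x)) =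
        (l.take j).countP (fun y => decide (y < x)) + (l.drop j).countP (fun y => decide (y < x)) := by
      conv_lhs => rw [← List.take_append_drop j l]
      rw [List.countP_append]
    have hdrop : (l.drop j).countP (fun y => decide (y < x)) = 0 := by
      rw [List.countP_eq_zero]
      intro a ha
      have hxa : x ≤ a := by
        rw [List.drop_eq_getElem_cons hj] at ha
        rcases List.mem_cons.1 ha with rfl | ha
        · exact h
        · refine le_trans h (hl.rel_of_mem_take_of_mem_drop ?_ ha)
          have hlen : j < (l.take (j+1)).length := by
            simp only [List.length_take]
            omega
          have := List.getElem_mem hlen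
          simpa using this
      simp [not_lt.2 hxa]
    calc l.countP (fun y => decide (y < x)) = _ := hsplit
      _ ≤ (l.take j).length + 0 := by rw [hdrop]; exact Nat.add_le_add_right List.countP_le_length 0
      _ ≤ j := by simp [List.length_take]
  · intro h
    by_contra hx
    push_neg at hx
    have hall : ∀ a ∈ l.take (j+1), decide (a < x) = true := by
      intro a ha
      rw [List.take_succ] at ha
      rcases List.mem_append.1 ha with ha | ha
      · have : a ≤ l[j] := hl.rel_of_mem_take_of_mem_drop ha (by
          rw [List.drop_eq_getElem_cons hj]; exact List.mem_cons_self)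
        simpa using lt_of_le_of_lt this hx
      · have : a = l[j] := by simpa [List.getElem?_eq_getElem hj] using ha
        simpa [this] using hx
    have h1 : (l.take (j+1)).countP (fun y => decide (y < x)) = j + 1 := by
      rw [List.countP_eq_length.2 hall, List.length_take]
      omega
    have h2 := List.Sublist.countP_le (p := fun y => decide (y < x)) (List.take_sublist (j+1) l)
    omega

lemma le_orderStat_iff {n : ℕ} (f : Fin n → ℝ) {k : ℕ} (hk1 : 1 ≤ k) (hkn : k ≤ n) (x : ℝ) :
    x ≤ orderStat f k ↔ (Finset.univ.filter (fun i => f i < x)).card ≤ k - 1 := by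
  set l := ((Multiset.map f Finset.univ.val).sort (· ≤ ·)) with hl
  have hlen : l.length = n := by
    rw [hl, Multiset.length_sort, Multiset.card_map]
    simp
  have hj : k - 1 < l.length := by omega
  have hsorted : l.Pairwise (· ≤ ·) := Multiset.pairwise_sort _ _
  have hgetD : orderStat f k = l.get ⟨k - 1, hj⟩ := by
    rw [orderStat, ← hl, List.getD_eq_getElem l 0 hj]
    rfl
  rw [hgetD, sorted_le_get_iff hsorted hj x]
  have hcount : l.countP (fun y => decide (y < x)) =
      (Finset.univ.filter (fun i => f i < x)).card := by
    have h1 : (l : Multiset ℝ) = Multiset.map f Finset.univ.val := Multiset.sort_eq _ _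
    have h2 : Multiset.countP (fun y => y < x) (l : Multiset ℝ)
        = l.countP (fun y => decide (y < x)) := by
      simp [Multiset.coe_countP]
    rw [← h2, h1, Multiset.countP_map]
    rw [Finset.card_filter]
    simp [Finset.sum_boole, Multiset.countP_eq_card_filter]
    rfl
  rw [hcount]

-- deterministic: event iff rank ≤ k
lemma le_orderStat_iff_rank {n : ℕ} {k : ℕ} (hk1 : 1 ≤ k) (hkn : k ≤ n)
    (g : Fin (n + 1) → ℝ) (hinj : Function.Injective g) :
    g (Fin.last n) ≤ orderStat (fun i : Fin n => g i.castSucc) k ↔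
      (Finset.univ.filter fun j => g j ≤ g (Fin.last n)).card ≤ k := by
  set x := g (Fin.last n) with hx
  have hcard : (Finset.univ.filter fun j => g j ≤ x).card =
      (Finset.univ.filter fun i : Fin n => g i.castSucc < x).card + 1 := by
    rw [Finset.card_filter, Finset.card_filter, Fin.sum_univ_castSucc]
    simp only [← hx, le_refl, if_true]
    congr 1
    apply Finset.sum_congr rfl
    intro i _
    have hne : g i.castSucc ≠ x := by
      intro h
      exact absurd (hinj h) (Fin.ne_last_of_lt (Fin.castSucc_lt_last i))
    by_cases h : g i.castSucc < x
    · simp [h, h.le]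
    · have : ¬ g i.castSucc ≤ x := fun hle => h (lt_of_le_of_ne hle hne)
      simp [h, this]
  rw [le_orderStat_iff _ hk1 hkn, hcard]
  omega

/-- Upper bound for conformal coverage: under exchangeability and a.s. distinct values,
coverage is at most `1 - α + 1/(n+1)`. -/
theorem conformal_coverage_upper
    {Ω : Type*} [MeasurableSpace Ω] (μ : Measure Ω) [IsProbabilityMeasure μ]
    {n : ℕ} (X : Fin (n + 1) → Ω → ℝ) (hmeas : ∀ i, Measurable (X i))
    (hexch : Exchangeable μ X)
    (hdistinct : ∀ᵐ ω ∂μ, Function.Injective (fun i => X i ω))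
    (α : ℝ) (hα : α ∈ Set.Ioo (0 : ℝ) 1)
    (hidx : ⌈((n : ℝ) + 1) * (1 - α)⌉₊ ≤ n) :
    μ {ω | X (Fin.last n) ω ≤
        orderStat (fun i : Fin n => X i.castSucc ω) ⌈((n : ℝ) + 1) * (1 - α)⌉₊} ≤
      ENNReal.ofReal (1 - α + 1 / ((n : ℝ) + 1)) := by
  obtain ⟨hα0, hα1⟩ := hα
  set k := ⌈((n : ℝ) + 1) * (1 - α)⌉₊ with hkdef
  have hk1 : 1 ≤ k := Nat.ceil_pos.2 (by nlinarith)
  set R : Fin (n + 1) → Ω → ℕ :=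
    fun i ω => (Finset.univ.filter fun j => X j ω ≤ X i ω).card with hR
  have hRmeas : ∀ i, Measurable (R i) := by
    intro i
    simp only [hR, Finset.card_filter]
    exact Finset.measurable_sum _ fun j _ =>
      Measurable.ite (measurableSet_le (hmeas j) (hmeas i)) measurable_const measurable_const
  set D : Set Ω := {ω | Function.Injective fun i => X i ω} with hDdef
  have hDmeas : MeasurableSet D := by
    have hDeq : D = ⋂ (i) (j) (_ : i ≠ j), {ω | X i ω = X j ω}ᶜ := by
      ext ω
      simp only [hDdef, Set.mem_setOf_eq, Set.mem_iInter, Set.mem_compl_iff]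
      constructor
      · intro h i j hij he
        exact hij (h he)
      · intro h a b hab
        by_contra hne
        exact h a b hne hab
    rw [hDeq]
    exact MeasurableSet.iInter fun i => MeasurableSet.iInter fun j =>
      MeasurableSet.iInter fun _ => (measurableSet_eq_fun (hmeas i) (hmeas j)).compl
  have hDc : μ Dᶜ = 0 := ae_iff.mp hdistinct
  -- key: each rank level has measure ≤ 1/(n+1)
  have key : ∀ m : ℕ, μ {ω | R (Fin.last n) ω = m} ≤ ((n : ℝ≥0∞) + 1)⁻¹ := by
    intro m
    set S : Set (Fin (n + 1) → ℝ) :=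
      {v | (Finset.univ.filter fun j => v j ≤ v (Fin.last n)).card = m} with hS
    have hFmeas : Measurable fun v : Fin (n + 1) → ℝ =>
        (Finset.univ.filter fun j => v j ≤ v (Fin.last n)).card := by
      simp only [Finset.card_filter]
      exact Finset.measurable_sum _ fun j _ =>
        Measurable.ite (measurableSet_le (measurable_pi_apply j)
          (measurable_pi_apply (Fin.last n))) measurable_const measurable_const
    have hSmeas : MeasurableSet S := hFmeas (measurableSet_singleton m)
    have heq : ∀ i, μ {ω | R i ω = m} = μ {ω | R (Fin.last n) ω = m} := by
      intro i
      set σ := Equiv.swap (Fin.last n) i with hσ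
      have h1 : {ω | R i ω = m} = (fun ω j => X (σ j) ω) ⁻¹' S := by
        ext ω
        simp only [Set.mem_preimage, Set.mem_setOf_eq, hS, hR]
        simp only [show σ (Fin.last n) = i from Equiv.swap_apply_left _ _]
        rw [card_filter_perm σ (fun j => X j ω ≤ X i ω)]
      have h2 : {ω | R (Fin.last n) ω = m} = (fun ω (j : Fin (n + 1)) => X j ω) ⁻¹' S := by
        ext ω
        simp only [Set.mem_preimage, Set.mem_setOf_eq, hS, hR]
      rw [h1, h2,
        ← Measure.map_apply (measurable_pi_lambda _ fun j => hmeas (σ j)) hSmeas,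
        ← Measure.map_apply (measurable_pi_lambda _ hmeas) hSmeas, hexch σ]
    have hdisj : Set.PairwiseDisjoint (↑(Finset.univ : Finset (Fin (n + 1))))
        (fun i => {ω | R i ω = m} ∩ D) := by
      intro i _ i' _ hii'
      refine Set.disjoint_left.2 ?_
      rintro ω ⟨hi, hDω⟩ ⟨hi', _⟩
      have hDω' : Function.Injective fun j => X j ω := hDω
      have hne : X i ω ≠ X i' ω := fun h => hii' (hDω' h)
      simp only [hR, Set.mem_setOf_eq] at hi hi'
      rcases hne.lt_or_gt with h | h
      · exact absurd (hi.trans hi'.symm) (Nat.ne_of_lt (rank_lt_rank h))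
      · exact absurd (hi'.trans hi.symm) (Nat.ne_of_lt (rank_lt_rank h))
    have hsum : ∑ i : Fin (n + 1), μ ({ω | R i ω = m} ∩ D) ≤ 1 := by
      rw [← measure_biUnion_finset hdisj
        (fun i _ => ((hRmeas i) (measurableSet_singleton m)).inter hDmeas)]
      exact prob_le_one
    have hAD : ∀ i, μ ({ω | R i ω = m} ∩ D) = μ {ω | R i ω = m} :=
      fun i => measure_inter_conull hDc
    have hsum2 : ((n : ℝ≥0∞) + 1) * μ {ω | R (Fin.last n) ω = m} ≤ 1 := by
      calc ((n : ℝ≥0∞) + 1) * μ {ω | R (Fin.last n) ω = m}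
          = ∑ _i : Fin (n + 1), μ {ω | R (Fin.last n) ω = m} := by
            rw [Finset.sum_const, Finset.card_univ, Fintype.card_fin, nsmul_eq_mul]
            push_cast
            ring_nf
        _ = ∑ i : Fin (n + 1), μ ({ω | R i ω = m} ∩ D) := by
            refine Finset.sum_congr rfl fun i _ => ?_
            rw [hAD i, heq i]
        _ ≤ 1 := hsum
    rw [ENNReal.le_inv_iff_mul_le, mul_comm]
    exact hsum2
  -- assemble
  have hsub : {ω | X (Fin.last n) ω ≤
      orderStat (fun i : Fin n => X i.castSucc ω) k} ∩ D
      ⊆ ⋃ m ∈ Finset.Icc 1 k, {ω | R (Fin.last n) ω = m} := by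
    rintro ω ⟨hω, hDω⟩
    have hDω' : Function.Injective fun j => X j ω := hDω
    have hrank : R (Fin.last n) ω ≤ k :=
      (le_orderStat_iff_rank hk1 hidx (fun j => X j ω) hDω').1 hω
    have hrank1 : 1 ≤ R (Fin.last n) ω := by
      simp only [hR]
      refine Finset.card_pos.2 ⟨Fin.last n, ?_⟩
      simp
    exact Set.mem_biUnion (Finset.mem_Icc.2 ⟨hrank1, hrank⟩) rfl
  calc μ {ω | X (Fin.last n) ω ≤ orderStat (fun i : Fin n => X i.castSucc ω) k}
      = μ ({ω | X (Fin.last n) ω ≤ orderStat (fun i : Fin n => X i.castSucc ω) k} ∩ D) :=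
        (measure_inter_conull hDc).symm
    _ ≤ μ (⋃ m ∈ Finset.Icc 1 k, {ω | R (Fin.last n) ω = m}) := measure_mono hsub
    _ ≤ ∑ m ∈ Finset.Icc 1 k, μ {ω | R (Fin.last n) ω = m} := measure_biUnion_finset_le _ _
    _ ≤ ∑ _m ∈ Finset.Icc 1 k, ((n : ℝ≥0∞) + 1)⁻¹ :=
        Finset.sum_le_sum fun m _ => key m
    _ = (k : ℝ≥0∞) * ((n : ℝ≥0∞) + 1)⁻¹ := by
        rw [Finset.sum_const, Nat.card_Icc, nsmul_eq_mul]
        norm_num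
    _ ≤ ENNReal.ofReal (1 - α + 1 / ((n : ℝ) + 1)) := by
        have hnum : (k : ℝ) ≤ ((n : ℝ) + 1) * (1 - α) + 1 :=
          (Nat.ceil_lt_add_one (by nlinarith)).le
        have hpos : (0 : ℝ) < (n : ℝ) + 1 := by positivity
        have hle : (k : ℝ) * ((n : ℝ) + 1)⁻¹ ≤ 1 - α + 1 / ((n : ℝ) + 1) := by
          rw [div_eq_mul_inv] at *
          rw [show (1 : ℝ) - α + 1 * ((n : ℝ) + 1)⁻¹ =
            (((n : ℝ) + 1) * (1 - α) + 1) * ((n : ℝ) + 1)⁻¹ by field_simp]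
          exact mul_le_mul_of_nonneg_right hnum (by positivity)
        calc (k : ℝ≥0∞) * ((n : ℝ≥0∞) + 1)⁻¹
            = ENNReal.ofReal ((k : ℝ) * ((n : ℝ) + 1)⁻¹) := by
              rw [ENNReal.ofReal_mul (by positivity), ENNReal.ofReal_inv_of_pos hpos]
              congr 1
              · rw [ENNReal.ofReal_natCast]
              · congr 1
                rw [ENNReal.ofReal_add (by positivity) zero_le_one, ENNReal.ofReal_natCast,
                  ENNReal.ofReal_one]
          _ ≤ ENNReal.ofReal (1 - α + 1 / ((n : ℝ) + 1)) := ENNReal.ofReal_le_ofReal hle
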